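/- The inverse semigroup S_X generated inside I(X) by {s_ε} ∪ {s_a : a ∈ A} equals the set {s_α E(F;v) s_β* : α, β, v ∈ A*, F ⊆ A* finite} ∪ {0}. -/
import Mathlib


open Function

/-- The one-sided shift map on `ℕ → A`. -/
def shft {A : Type*} (x : ℕ → A) : ℕ → A := fun n => x (n + 1)

/-- Concatenation of a finite word `w` with an infinite word `x`. -/
def wcat {A : Type*} (w : List A) (x : ℕ → A) : ℕ → A :=
  fun n => w.getD n (x (n - w.length))

/-- Partial bijections on `ℕ → A` modelled as relations (sets of pairs (input, output)). -/
abbrev PB (A : Type*) := Set ((ℕ → A) × (ℕ → A))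

/-- Composition on the largest possible domain: `rcomp r s` applies `s` first, then `r`
(i.e. the semigroup product `r · s`). -/
def rcomp {A : Type*} (r s : PB A) : PB A := {p | ∃ y, (p.1, y) ∈ s ∧ (y, p.2) ∈ r}

/-- Inverse of a partial bijection. -/
def rinv {A : Type*} (r : PB A) : PB A := {p | (p.2, p.1) ∈ r}

/-- The identity map on a subset `U`. -/
def idOn {A : Type*} (U : Set (ℕ → A)) : PB A := {p | p.1 ∈ U ∧ p.2 = p.1}

/-- The partial bijection `s_μ : x ↦ μx` on `{x ∈ X : μx ∈ X}`. -/
def sMap {A : Type*} (X : Set (ℕ → A)) (μ : List A) : PB A :=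
  {p | p.1 ∈ X ∧ wcat μ p.1 ∈ X ∧ p.2 = wcat μ p.1}

/-- The cylinder set `C(v) = {vx : x ∈ A^ℕ} ∩ X`. -/
def Cyl {A : Type*} (X : Set (ℕ → A)) (v : List A) : Set (ℕ → A) :=
  {y | y ∈ X ∧ ∃ x, y = wcat v x}

/-- `C(μ,ν) = {νx ∈ X : μx ∈ X}`. -/
def Cmn {A : Type*} (X : Set (ℕ → A)) (μ ν : List A) : Set (ℕ → A) :=
  {y | ∃ x, y = wcat ν x ∧ y ∈ X ∧ wcat μ x ∈ X}

/-- `C(F;v) = {vx ∈ X : fx ∈ X for all f ∈ F}`. -/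
def CFv {A : Type*} (X : Set (ℕ → A)) (F : Finset (List A)) (v : List A) : Set (ℕ → A) :=
  {y | ∃ x, y = wcat v x ∧ y ∈ X ∧ ∀ f ∈ F, wcat f x ∈ X}

/-- The idempotent `E(F;v) = Id_{C(F;v)}`. -/
def Efv {A : Type*} (X : Set (ℕ → A)) (F : Finset (List A)) (v : List A) : PB A :=
  idOn (CFv X F v)

/-- The set `E_X = {E(F;v)} ∪ {0}` of idempotents. -/
def EXset {A : Type*} (X : Set (ℕ → A)) : Set (PB A) :=
  {r | r = ∅ ∨ ∃ (F : Finset (List A)) (v : List A), r = Efv X F v}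

/-- The element `s_α E(F;v) s_β^*` of `I(X)`. -/
def elt {A : Type*} (X : Set (ℕ → A)) (α : List A) (F : Finset (List A)) (v β : List A) :
    PB A :=
  rcomp (rcomp (sMap X α) (Efv X F v)) (rinv (sMap X β))

/-- The inverse semigroup `S_X = {s_α E(F;v) s_β^*} ∪ {0}` (closed form). -/
def SXset {A : Type*} (X : Set (ℕ → A)) : Set (PB A) :=
  {r | r = ∅ ∨ ∃ (α β v : List A) (F : Finset (List A)), r = elt X α F v β}

/-- `α` and `β` are in lowest terms: they do not both end with the same letter. -/
def LowTerms {A : Type*} (α β : List A) : Prop :=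
  ∀ a : A, ¬(α.getLast? = some a ∧ β.getLast? = some a)

/-- A word viewed as an element of the free group on `A`. -/
def wgrp {A : Type*} (w : List A) : FreeGroup A := (w.map FreeGroup.of).prod

/-- Natural partial order on partial bijections: `s ≤ t` iff `t s^* s = s`. -/
def rle {A : Type*} (s t : PB A) : Prop := rcomp t (rcomp (rinv s) s) = s

/-- `P_k(x) = {μ ∈ A^k : μx ∈ X}`. -/
def Pk {A : Type*} (X : Set (ℕ → A)) (k : ℕ) (x : ℕ → A) : Set (List A) :=
  {μ | μ.length = k ∧ wcat μ x ∈ X}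

/-- `l`-past equivalence: `P_r(x) = P_r(y)` for all `r ≤ l`. -/
def pastEq {A : Type*} (X : Set (ℕ → A)) (l : ℕ) (x y : ℕ → A) : Prop :=
  ∀ r ≤ l, Pk X r x = Pk X r y

/-- The relation `x ~_{(k,l)} y`. -/
def klEq {A : Type*} (X : Set (ℕ → A)) (k l : ℕ) (x y : ℕ → A) : Prop :=
  (∀ i < k, x i = y i) ∧ pastEq X l (shft^[k] x) (shft^[k] y)

/-- The inverse subsemigroup (with zero) of `I(X)` generated by `s_ε` and the `s_a`, `a ∈ A`. -/
inductive GenSX {A : Type*} (X : Set (ℕ → A)) : PB A → Prop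
  | eps : GenSX X (sMap X [])
  | base (a : A) : GenSX X (sMap X [a])
  | zero : GenSX X ∅
  | comp : ∀ {r s : PB A}, GenSX X r → GenSX X s → GenSX X (rcomp r s)
  | inv : ∀ {r : PB A}, GenSX X r → GenSX X (rinv r)

/-! ### Auxiliary lemmas -/

section Aux

variable {A : Type*}

lemma wcat_nil (x : ℕ → A) : wcat [] x = x := by
  funext n; simp [wcat]

lemma wcat_cons_zero (a : A) (w : List A) (x : ℕ → A) : wcat (a :: w) x 0 = a := rfl

lemma shft_wcat_cons (a : A) (w : List A) (x : ℕ → A) :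
    shft (wcat (a :: w) x) = wcat w x := by
  funext n
  simp [shft, wcat, Nat.succ_sub_succ]

lemma wcat_append (u v : List A) (x : ℕ → A) :
    wcat (u ++ v) x = wcat u (wcat v x) := by
  induction u with
  | nil => simp [wcat_nil]
  | cons a u ih =>
    funext n
    cases n with
    | zero => rfl
    | succ n =>
      have h1 := congrFun (shft_wcat_cons a (u ++ v) x) n
      have h2 := congrFun (shft_wcat_cons a u (wcat v x)) n
      simp only [shft] at h1 h2
      rw [List.cons_append] at *
      rw [h1, h2, ih]

lemma wcat_injective (w : List A) {x y : ℕ → A} (h : wcat w x = wcat w y) : x = y := by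
  induction w with
  | nil => rwa [wcat_nil, wcat_nil] at h
  | cons a w ih =>
    apply ih
    rw [← shft_wcat_cons a w x, ← shft_wcat_cons a w y, h]

lemma wcat_prefix {p q : List A} {z u : ℕ → A} (h : wcat p z = wcat q u) :
    p <+: q ∨ q <+: p := by
  induction p generalizing q with
  | nil => exact Or.inl (List.nil_prefix)
  | cons a p ih =>
    cases q with
    | nil => exact Or.inr (List.nil_prefix)
    | cons b q =>
      have h0 : a = b := by
        have := congrFun h 0
        simpa [wcat_cons_zero] using this
      have ht : wcat p z = wcat q u := by
        rw [← shft_wcat_cons a p z, ← shft_wcat_cons b q u, h]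
      rcases ih ht with hp | hp
      · subst h0
        exact Or.inl ⟨hp.choose, by rw [List.cons_append, hp.choose_spec]⟩
      · subst h0
        exact Or.inr ⟨hp.choose, by rw [List.cons_append, hp.choose_spec]⟩

variable {X : Set (ℕ → A)}

lemma mem_of_wcat_mem (hXsh : ∀ x ∈ X, shft x ∈ X) {w : List A} {x : ℕ → A}
    (h : wcat w x ∈ X) : x ∈ X := by
  induction w with
  | nil => rwa [wcat_nil] at h
  | cons a w ih =>
    apply ih
    have := hXsh _ h
    rwa [shft_wcat_cons] at this

lemma wcat_mem_of_append (hXsh : ∀ x ∈ X, shft x ∈ X) {u v : List A} {x : ℕ → A}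
    (h : wcat (u ++ v) x ∈ X) : wcat v x ∈ X := by
  rw [wcat_append] at h
  exact mem_of_wcat_mem hXsh h

/-! Semigroup algebra -/

lemma rcomp_assoc (r s t : PB A) : rcomp (rcomp r s) t = rcomp r (rcomp s t) := by
  ext p
  constructor
  · rintro ⟨y, hy, z, hz1, hz2⟩; exact ⟨z, ⟨y, hy, hz1⟩, hz2⟩
  · rintro ⟨z, ⟨y, hy, hz1⟩, hz2⟩; exact ⟨y, hy, z, hz1, hz2⟩

lemma rinv_rcomp (r s : PB A) : rinv (rcomp r s) = rcomp (rinv s) (rinv r) := by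
  ext p
  constructor
  · rintro ⟨y, h1, h2⟩; exact ⟨y, h2, h1⟩
  · rintro ⟨y, h1, h2⟩; exact ⟨y, h2, h1⟩

lemma rinv_rinv (r : PB A) : rinv (rinv r) = r := rfl

lemma rinv_empty : rinv (∅ : PB A) = ∅ := by
  ext p; exact Iff.rfl

lemma rcomp_empty_left (s : PB A) : rcomp ∅ s = ∅ := by
  ext p; simp [rcomp]

lemma rcomp_empty_right (s : PB A) : rcomp s ∅ = ∅ := by
  ext p; simp [rcomp]

lemma sMap_nil : sMap X [] = idOn X := by
  ext p
  simp [sMap, idOn, wcat_nil, and_assoc]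

lemma sMap_append (hXsh : ∀ x ∈ X, shft x ∈ X) (μ ν : List A) :
    rcomp (sMap X μ) (sMap X ν) = sMap X (μ ++ ν) := by
  ext ⟨x, y⟩
  simp only [rcomp, sMap, Set.mem_setOf_eq]
  constructor
  · rintro ⟨z, ⟨h1, h2, hz⟩, h3, h4, h5⟩
    subst hz
    exact ⟨h1, by rwa [wcat_append], by rwa [wcat_append]⟩
  · rintro ⟨h1, h2, h3⟩
    rw [wcat_append] at h2 h3
    exact ⟨wcat ν x, ⟨h1, mem_of_wcat_mem hXsh (w := μ) h2, rfl⟩,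
      mem_of_wcat_mem hXsh (w := μ) h2, h2, h3⟩

lemma GenSX_sMap (hXsh : ∀ x ∈ X, shft x ∈ X) (μ : List A) : GenSX X (sMap X μ) := by
  induction μ with
  | nil => exact GenSX.eps
  | cons a μ ih =>
    have : sMap X (a :: μ) = rcomp (sMap X [a]) (sMap X μ) := by
      rw [sMap_append hXsh]; rfl
    rw [this]
    exact GenSX.comp (GenSX.base a) ih

/-- Normal form for `s_α E(F;v) s_β^*` as an explicit set of pairs. -/
def nf (X : Set (ℕ → A)) (α : List A) (F : Finset (List A)) (v β : List A) : PB A :=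
  {p | ∃ z, wcat v z ∈ X ∧ (∀ f ∈ F, wcat f z ∈ X) ∧ wcat β (wcat v z) ∈ X ∧
    wcat α (wcat v z) ∈ X ∧ p.1 = wcat β (wcat v z) ∧ p.2 = wcat α (wcat v z)}

lemma elt_eq_nf (α : List A) (F : Finset (List A)) (v β : List A) :
    elt X α F v β = nf X α F v β := by
  ext ⟨x, y⟩
  simp only [elt, nf, rcomp, rinv, sMap, Efv, idOn, CFv, Set.mem_setOf_eq]
  constructor
  · rintro ⟨y', ⟨hy'X, hβ, hx⟩, u, ⟨⟨z, hyz, hyX, hF⟩, hu⟩, huX, hα, hy⟩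
    subst hu; subst hyz
    exact ⟨z, hyX, hF, hβ, hα, hx, hy⟩
  · rintro ⟨z, hv, hF, hβ, hα, hx, hy⟩
    exact ⟨wcat v z, ⟨hv, hβ, hx⟩, wcat v z, ⟨⟨z, rfl, hv, hF⟩, rfl⟩, hv, hα, hy⟩

lemma nf_mem_SXset (α : List A) (F : Finset (List A)) (v β : List A) :
    nf X α F v β ∈ SXset X :=
  Or.inr ⟨α, β, v, F, (elt_eq_nf α F v β).symm⟩

lemma rinv_nf (α : List A) (F : Finset (List A)) (v β : List A) :
    rinv (nf X α F v β) = nf X β F v α := by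
  ext ⟨x, y⟩
  simp only [nf, rinv, Set.mem_setOf_eq]
  constructor
  · rintro ⟨z, hv, hF, hβ, hα, hx, hy⟩
    exact ⟨z, hv, hF, hα, hβ, hy, hx⟩
  · rintro ⟨z, hv, hF, hβ, hα, hx, hy⟩
    exact ⟨z, hv, hF, hα, hβ, hy, hx⟩

lemma sMap_eq_nf (μ : List A) : sMap X μ = nf X μ ∅ [] [] := by
  ext ⟨x, y⟩
  simp only [sMap, nf, Set.mem_setOf_eq, wcat_nil, Finset.notMem_empty,
    false_implies, implies_true, true_and]
  constructor
  · rintro ⟨h1, h2, h3⟩; exact ⟨x, h1, h1, h2, rfl, h3⟩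
  · rintro ⟨z, h1, _, h2, rfl, h3⟩; exact ⟨h1, h2, h3⟩

/-- The idempotent `Id_{ {x ∈ X : fx ∈ X ∀ f ∈ F} }`. -/
def eW (X : Set (ℕ → A)) (F : Finset (List A)) : PB A :=
  idOn {x | x ∈ X ∧ ∀ f ∈ F, wcat f x ∈ X}

lemma GenSX_eW (hXsh : ∀ x ∈ X, shft x ∈ X) (F : Finset (List A)) : GenSX X (eW X F) := by
  classical
  induction F using Finset.induction_on with
  | empty =>
    have : eW X ∅ = sMap X [] := by
      rw [sMap_nil]
      ext ⟨x, y⟩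
      simp [eW, idOn]
    rw [this]; exact GenSX.eps
  | @insert f F hf ih =>
    have : eW X (insert f F) = rcomp (eW X F) (rcomp (rinv (sMap X f)) (sMap X f)) := by
      ext ⟨x, y⟩
      simp only [eW, rcomp, rinv, sMap, idOn, Set.mem_setOf_eq]
      constructor
      · rintro ⟨⟨hX, hall⟩, hyx⟩
        refine ⟨x, ⟨wcat f x, ⟨hX, hall f (Finset.mem_insert_self f F), rfl⟩,
          hX, hall f (Finset.mem_insert_self f F), rfl⟩,
          ⟨hX, fun g hg => hall g (Finset.mem_insert_of_mem hg)⟩, hyx⟩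
      · rintro ⟨z, ⟨u, ⟨h1, h2, hu⟩, h3, h4, h5⟩, ⟨h6, h7⟩, hyz⟩
        have hxz : x = z := wcat_injective f (by rw [← hu, h5])
        subst hxz
        refine ⟨⟨h1, fun g hg => ?_⟩, hyz⟩
        rcases Finset.mem_insert.1 hg with rfl | hg
        · exact h2
        · exact h7 g hg
    rw [this]
    exact GenSX.comp ih (GenSX.comp (GenSX.inv (GenSX_sMap hXsh f)) (GenSX_sMap hXsh f))

lemma Efv_eq (hXsh : ∀ x ∈ X, shft x ∈ X) (F : Finset (List A)) (v : List A) :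
    Efv X F v = rcomp (rcomp (sMap X v) (eW X F)) (rinv (sMap X v)) := by
  ext ⟨x, y⟩
  simp only [Efv, eW, rcomp, rinv, sMap, idOn, CFv, Set.mem_setOf_eq]
  constructor
  · rintro ⟨⟨z, rfl, hX, hF⟩, rfl⟩
    have hz : z ∈ X := mem_of_wcat_mem hXsh hX
    exact ⟨z, ⟨hz, hX, rfl⟩, z, ⟨⟨hz, hF⟩, rfl⟩, hz, hX, rfl⟩
  · rintro ⟨z, ⟨h1, h2, rfl⟩, u, ⟨⟨h3, h4⟩, hu⟩, h5, h6, rfl⟩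
    subst hu
    exact ⟨⟨u, rfl, h2, h4⟩, rfl⟩

lemma GenSX_elt (hXsh : ∀ x ∈ X, shft x ∈ X) (α : List A) (F : Finset (List A))
    (v β : List A) : GenSX X (elt X α F v β) := by
  unfold elt
  rw [Efv_eq hXsh]
  exact GenSX.comp (GenSX.comp (GenSX_sMap hXsh α)
    (GenSX.comp (GenSX.comp (GenSX_sMap hXsh v) (GenSX_eW hXsh F))
      (GenSX.inv (GenSX_sMap hXsh v)))) (GenSX.inv (GenSX_sMap hXsh β))

lemma rcomp_nf (hXsh : ∀ x ∈ X, shft x ∈ X) (α : List A) (F : Finset (List A)) (v β γ : List A)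
    (G : Finset (List A)) (w δ : List A) :
    rcomp (nf X α F v β) (nf X γ G w δ) ∈ SXset X := by
  classical
  by_cases h1 : (β ++ v) <+: (γ ++ w)
  · obtain ⟨τ, ht⟩ := h1
    refine Or.inr ⟨α ++ (v ++ τ), δ ++ w, [],
      insert w (insert (γ ++ w) (insert (v ++ τ) (G ∪ F.image (· ++ τ)))), ?_⟩
    rw [elt_eq_nf]
    ext ⟨x, y⟩
    simp only [rcomp, nf, Set.mem_setOf_eq, wcat_nil]
    constructor
    · rintro ⟨c, ⟨z, hw, hG, hδ, hγ, hx, hc⟩, u, hv, hF, hβ, hα, hc', hy⟩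
      have e1 : c = wcat (β ++ v) u := by rw [hc', wcat_append]
      have e2 : c = wcat ((β ++ v) ++ τ) z := by rw [hc, ← wcat_append, ← ht]
      have hu : u = wcat τ z :=
        wcat_injective (β ++ v) (e1.symm.trans (e2.trans (wcat_append _ _ _)))
      subst hu
      refine ⟨z, mem_of_wcat_mem hXsh hw, ?_, ?_, ?_, ?_, ?_⟩
      · intro f' hf'
        simp only [Finset.mem_insert, Finset.mem_union, Finset.mem_image] at hf'
        rcases hf' with rfl | rfl | rfl | hg | ⟨f, hf, rfl⟩
        · exact hw
        · rw [wcat_append]; exact hγ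
        · rw [wcat_append]; exact hv
        · exact hG _ hg
        · rw [wcat_append]; exact hF _ hf
      · rw [wcat_append]; exact hδ
      · rw [wcat_append, wcat_append]; exact hα
      · rw [wcat_append]; exact hx
      · rw [wcat_append, wcat_append]; exact hy
    · rintro ⟨z, hz, hf', hδ', hα', hx, hy⟩
      have hw : wcat w z ∈ X := hf' w (by simp)
      have hγw : wcat (γ ++ w) z ∈ X := hf' _ (by simp)
      have hvτ : wcat (v ++ τ) z ∈ X := hf' _ (by simp)
      refine ⟨wcat γ (wcat w z),
        ⟨z, hw, fun g hg => hf' g (by simp [hg]), ?_, ?_, ?_, rfl⟩,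
        wcat τ z, ?_, ?_, ?_, ?_, ?_, ?_⟩
      · rw [← wcat_append]; exact hδ'
      · rw [← wcat_append]; exact hγw
      · rw [← wcat_append]; exact hx
      · rw [← wcat_append]; exact hvτ
      · intro f hf
        rw [← wcat_append]
        refine hf' (f ++ τ) ?_
        simp only [Finset.mem_insert, Finset.mem_union, Finset.mem_image]
        exact Or.inr (Or.inr (Or.inr (Or.inr ⟨f, hf, rfl⟩)))
      · rw [← wcat_append, ← wcat_append, ht]; exact hγw
      · rw [← wcat_append, ← wcat_append, List.append_assoc]; exact hα'
      · rw [← wcat_append, ← wcat_append, ← wcat_append, ht]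
      · rw [← wcat_append, ← wcat_append, List.append_assoc]; exact hy
  · by_cases h2 : (γ ++ w) <+: (β ++ v)
    · obtain ⟨τ, ht⟩ := h2
      refine Or.inr ⟨α ++ v, (δ ++ w) ++ τ, [],
        insert v (insert (β ++ v) (insert (w ++ τ) (F ∪ G.image (· ++ τ)))), ?_⟩
      rw [elt_eq_nf]
      ext ⟨x, y⟩
      simp only [rcomp, nf, Set.mem_setOf_eq, wcat_nil]
      constructor
      · rintro ⟨c, ⟨z, hw, hG, hδ, hγ, hx, hc⟩, u, hv, hF, hβ, hα, hc', hy⟩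
        have e1 : c = wcat ((γ ++ w) ++ τ) u := by rw [hc', ← wcat_append, ← ht]
        have e2 : c = wcat (γ ++ w) z := by rw [hc, wcat_append]
        have hz : z = wcat τ u :=
          wcat_injective (γ ++ w) (e2.symm.trans (e1.trans (wcat_append _ _ _)))
        subst hz
        refine ⟨u, mem_of_wcat_mem hXsh hv, ?_, ?_, ?_, ?_, ?_⟩
        · intro f' hf'
          simp only [Finset.mem_insert, Finset.mem_union, Finset.mem_image] at hf'
          rcases hf' with rfl | rfl | rfl | hf | ⟨g, hg, rfl⟩
          · exact hv
          · rw [wcat_append]; exact hβ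
          · rw [wcat_append]; exact hw
          · exact hF _ hf
          · rw [wcat_append]; exact hG _ hg
        · rw [wcat_append, wcat_append]; exact hδ
        · rw [wcat_append]; exact hα
        · rw [wcat_append, wcat_append]; exact hx
        · rw [wcat_append]; exact hy
      · rintro ⟨u, hu, hf', hδ', hα', hx, hy⟩
        have hv : wcat v u ∈ X := hf' v (by simp)
        have hβv : wcat (β ++ v) u ∈ X := hf' _ (by simp)
        have hwτ : wcat (w ++ τ) u ∈ X := hf' _ (by simp)
        refine ⟨wcat β (wcat v u),
          ⟨wcat τ u, ?_, ?_, ?_, ?_, ?_, ?_⟩, u, hv, ?_, ?_, ?_, rfl, ?_⟩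
        · rw [← wcat_append]; exact hwτ
        · intro g hg
          rw [← wcat_append]
          refine hf' (g ++ τ) ?_
          simp only [Finset.mem_insert, Finset.mem_union, Finset.mem_image]
          exact Or.inr (Or.inr (Or.inr (Or.inr ⟨g, hg, rfl⟩)))
        · rw [← wcat_append, ← wcat_append]; exact hδ'
        · rw [← wcat_append, ← wcat_append, ht]; exact hβv
        · rw [← wcat_append, ← wcat_append]; exact hx
        · rw [← wcat_append, ← wcat_append, ← wcat_append, ht]
        · intro f hf
          exact hf' f (by simp [hf])
        · rw [← wcat_append]; exact hβv
        · rw [← wcat_append]; exact hα'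
        · rw [← wcat_append]; exact hy
    · refine Or.inl ?_
      ext ⟨x, y⟩
      simp only [rcomp, nf, Set.mem_setOf_eq, Set.mem_empty_iff_false, iff_false]
      rintro ⟨c, ⟨z, _, _, _, _, _, hc⟩, u, _, _, _, _, hc', _⟩
      have e : wcat β (wcat v u) = wcat γ (wcat w z) := hc'.symm.trans hc
      rw [← wcat_append, ← wcat_append] at e
      rcases wcat_prefix e with h | h
      · exact h1 h
      · exact h2 h

lemma SXset_rinv {r : PB A} (hr : r ∈ SXset X) : rinv r ∈ SXset X := by
  rcases hr with rfl | ⟨α, β, v, F, rfl⟩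
  · rw [rinv_empty]; exact Or.inl rfl
  · rw [elt_eq_nf, rinv_nf]; exact nf_mem_SXset β F v α

lemma SXset_rcomp (hXsh : ∀ x ∈ X, shft x ∈ X) {r s : PB A}
    (hr : r ∈ SXset X) (hs : s ∈ SXset X) : rcomp r s ∈ SXset X := by
  rcases hr with rfl | ⟨α, β, v, F, rfl⟩
  · rw [rcomp_empty_left]; exact Or.inl rfl
  · rcases hs with rfl | ⟨γ, δ, w, G, rfl⟩
    · rw [rcomp_empty_right]; exact Or.inl rfl
    · rw [elt_eq_nf, elt_eq_nf]
      exact rcomp_nf hXsh α F v β γ G w δ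

end Aux

theorem stmt4 {A : Type*} [Fintype A] [TopologicalSpace A] [DiscreteTopology A]
    (X : Set (ℕ → A)) (hXcl : IsClosed X) (hXsh : ∀ x ∈ X, shft x ∈ X) :
    {r : PB A | GenSX X r} = SXset X := by
  ext r
  simp only [Set.mem_setOf_eq]
  constructor
  · intro h
    induction h with
    | eps => rw [sMap_eq_nf]; exact nf_mem_SXset _ _ _ _
    | base a => rw [sMap_eq_nf]; exact nf_mem_SXset _ _ _ _
    | zero => exact Or.inl rfl
    | comp h1 h2 ih1 ih2 => exact SXset_rcomp hXsh ih1 ih2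
    | inv h ih => exact SXset_rinv ih
  · intro h
    rcases h with rfl | ⟨α, β, v, F, rfl⟩
    · exact GenSX.zero
    · exact GenSX_elt hXsh α F v β
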